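/- Let $0 < \alpha \leq 1$ and define $t_n^{\alpha} = \frac{1}{A_n^{\alpha}} \sum_{v=1}^{n} A_{n-v}^{\alpha-1} v a_v$ (the $n$th Cesàro mean of order $\alpha$ of $(n a_n)$), and $w_n^{\alpha} = |t_n^{\alpha}|$ if $\alpha = 1$, $w_n^{\alpha} = \max_{1 \leq v \leq n} |t_v^{\alpha}|$ if $0 < \alpha < 1$. Then for $1 \leq v \leq n$, $\left|\sum_{p=1}^{v} A_{n-p}^{\alpha-1} p a_p\right| \leq A_v^{\alpha} w_v^{\alpha}$. -/

import Mathlib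

noncomputable def cesaroA (β : ℝ) (n : ℕ) : ℝ :=
  ∏ i ∈ Finset.range n, (β + i + 1) / (i + 1)

/-- `t_n^α`, the `n`th Cesàro mean of order `α` of the sequence `(n a_n)`. -/
noncomputable def tCes (α : ℝ) (a : ℕ → ℝ) (n : ℕ) : ℝ :=
  (cesaroA α n)⁻¹ * ∑ v ∈ Finset.Icc 1 n, cesaroA (α - 1) (n - v) * v * a v

/-- `w_n^α = |t_n^α|` if `α = 1`, and `max_{1 ≤ v ≤ n} |t_v^α|` if `0 < α < 1`. -/
noncomputable def wCes (α : ℝ) (a : ℕ → ℝ) (n : ℕ) : ℝ :=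
  if α = 1 then |tCes 1 a n|
  else sSup ((fun v => |tCes α a v|) '' (Set.Icc 1 n))

open Finset

lemma cesaroA_zero (β : ℝ) : cesaroA β 0 = 1 := by simp [cesaroA]

lemma cesaroA_succ (β : ℝ) (n : ℕ) :
    cesaroA β (n + 1) = cesaroA β n * ((β + n + 1) / (n + 1)) := by
  unfold cesaroA
  rw [Finset.prod_range_succ]

lemma cesaroA_succ_mul (β : ℝ) (n : ℕ) :
    ((n : ℝ) + 1) * cesaroA β (n + 1) = (β + n + 1) * cesaroA β n := by
  rw [cesaroA_succ]
  have h : (n : ℝ) + 1 ≠ 0 := by positivity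
  field_simp

lemma cesaroA_pos {β : ℝ} (hβ : -1 < β) (n : ℕ) : 0 < cesaroA β n := by
  apply Finset.prod_pos
  intro i _
  have : (0:ℝ) ≤ (i:ℝ) := Nat.cast_nonneg i
  apply div_pos <;> linarith

lemma cesaroA_order_zero (n : ℕ) : cesaroA 0 n = 1 := by
  unfold cesaroA
  apply Finset.prod_eq_one
  intro i _
  have : (0:ℝ) ≤ (i:ℝ) := Nat.cast_nonneg i
  field_simp
  ring

lemma cesaroA_neg_one {n : ℕ} (h : 1 ≤ n) : cesaroA (-1) n = 0 := by
  apply Finset.prod_eq_zero (Finset.mem_range.mpr h)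
  norm_num

lemma cesaroA_nonpos {β : ℝ} (h2 : -2 ≤ β) (h1 : β ≤ -1) {n : ℕ} (hn : 1 ≤ n) :
    cesaroA β n ≤ 0 := by
  obtain ⟨m, rfl⟩ : ∃ m, n = m + 1 := ⟨n - 1, by omega⟩
  unfold cesaroA
  rw [Finset.prod_range_succ']
  apply mul_nonpos_of_nonneg_of_nonpos
  · apply Finset.prod_nonneg
    intro i _
    have : (0:ℝ) ≤ (i:ℝ) := Nat.cast_nonneg i
    apply div_nonneg <;> push_cast <;> linarith
  · have : β + (0:ℕ) + 1 ≤ 0 := by push_cast; linarith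
    have h0 : (0:ℝ) < ((0:ℕ):ℝ) + 1 := by norm_num
    exact div_nonpos_of_nonpos_of_nonneg (by push_cast; linarith) (by norm_num)

lemma cesaroA_antitone {β : ℝ} (hβ1 : -1 < β) (hβ0 : β ≤ 0) : Antitone (cesaroA β) := by
  apply antitone_nat_of_succ_le
  intro n
  rw [cesaroA_succ]
  have hpos := cesaroA_pos hβ1 n
  have h1 : (β + n + 1) / (n + 1) ≤ 1 := by
    apply div_le_one_of_le₀
    · linarith
    · positivity
  nlinarith [div_nonneg (by linarith : (0:ℝ) ≤ β + n + 1) (by positivity : (0:ℝ) ≤ (n:ℝ)+1)]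

lemma vandermonde (β γ : ℝ) : ∀ m : ℕ,
    ∑ k ∈ Finset.range (m + 1), cesaroA β k * cesaroA γ (m - k) = cesaroA (β + γ + 1) m := by
  intro m
  induction m with
  | zero => simp [cesaroA_zero]
  | succ m ih =>
    have key : ((m : ℝ) + 1) * ∑ k ∈ Finset.range (m + 2), cesaroA β k * cesaroA γ (m + 1 - k)
        = (β + γ + m + 2) * cesaroA (β + γ + 1) m := by
      rw [Finset.mul_sum]
      have hsplit : ∀ k ∈ Finset.range (m + 2),
          ((m:ℝ) + 1) * (cesaroA β k * cesaroA γ (m + 1 - k))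
          = (k : ℝ) * cesaroA β k * cesaroA γ (m + 1 - k)
            + cesaroA β k * (((m + 1 - k : ℕ) : ℝ) * cesaroA γ (m + 1 - k)) := by
        intro k hk
        rw [Finset.mem_range] at hk
        have : ((m + 1 - k : ℕ) : ℝ) = (m : ℝ) + 1 - k := by
          push_cast [Nat.cast_sub (by omega : k ≤ m + 1)]; ring
        rw [this]; ring
      rw [Finset.sum_congr rfl hsplit, Finset.sum_add_distrib]
      have e1 : ∑ k ∈ Finset.range (m + 2), (k : ℝ) * cesaroA β k * cesaroA γ (m + 1 - k)
          = ∑ k ∈ Finset.range (m + 1), (β + k + 1) * (cesaroA β k * cesaroA γ (m - k)) := by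
        rw [Finset.sum_range_succ']
        simp only [Nat.cast_zero, zero_mul, add_zero]
        apply Finset.sum_congr rfl
        intro i hi
        rw [Finset.mem_range] at hi
        have h1 : m + 1 - (i + 1) = m - i := by omega
        rw [h1]
        have h := cesaroA_succ_mul β i
        push_cast
        linear_combination cesaroA γ (m - i) * h
      have e2 : ∑ k ∈ Finset.range (m + 2),
            cesaroA β k * (((m + 1 - k : ℕ) : ℝ) * cesaroA γ (m + 1 - k))
          = ∑ k ∈ Finset.range (m + 1), (γ + (m - k : ℕ) + 1) * (cesaroA β k * cesaroA γ (m - k)) := by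
        rw [Finset.sum_range_succ]
        simp only [Nat.sub_self, Nat.cast_zero, zero_mul, mul_zero, add_zero]
        apply Finset.sum_congr rfl
        intro k hk
        rw [Finset.mem_range] at hk
        have h1 : m + 1 - k = (m - k) + 1 := by omega
        rw [h1]
        have h := cesaroA_succ_mul γ (m - k)
        push_cast
        linear_combination cesaroA β k * h
      rw [e1, e2, ← Finset.sum_add_distrib]
      have e3 : ∀ k ∈ Finset.range (m + 1),
          (β + k + 1) * (cesaroA β k * cesaroA γ (m - k))
            + (γ + (m - k : ℕ) + 1) * (cesaroA β k * cesaroA γ (m - k))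
          = (β + γ + m + 2) * (cesaroA β k * cesaroA γ (m - k)) := by
        intro k hk
        rw [Finset.mem_range] at hk
        have : ((m - k : ℕ) : ℝ) = (m : ℝ) - k := by
          push_cast [Nat.cast_sub (by omega : k ≤ m)]; ring
        rw [this]; ring
      rw [Finset.sum_congr rfl e3, ← Finset.mul_sum, ih]
    have hm : ((m : ℝ) + 1) ≠ 0 := by positivity
    have := cesaroA_succ_mul (β + γ + 1) m
    have h2 : ((m : ℝ) + 1) * ∑ k ∈ Finset.range (m + 2), cesaroA β k * cesaroA γ (m + 1 - k)
        = ((m : ℝ) + 1) * cesaroA (β + γ + 1) (m + 1) := by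
      rw [key, this]; ring
    exact mul_left_cancel₀ hm h2

lemma cesaroA_neg_one_nonneg (m : ℕ) : 0 ≤ cesaroA (-1) m := by
  cases m with
  | zero => rw [cesaroA_zero]; norm_num
  | succ k => rw [cesaroA_neg_one (by omega)]

lemma sum_triangle (n : ℕ) (g : ℕ → ℕ → ℝ) :
    ∑ j ∈ Finset.range (n + 1), ∑ q ∈ Finset.range (j + 1), g j q
      = ∑ q ∈ Finset.range (n + 1), ∑ j ∈ Finset.Icc q n, g j q := by
  apply Finset.sum_comm'
  intro x y
  simp only [Finset.mem_range, Finset.mem_Icc]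
  omega

lemma sum_Icc_kernel (β γ : ℝ) (j n : ℕ) (h : j ≤ n) :
    ∑ p ∈ Finset.Icc j n, cesaroA β (n - p) * cesaroA γ (p - j)
      = cesaroA (γ + β + 1) (n - j) := by
  rw [← Finset.Ico_add_one_right_eq_Icc, Finset.sum_Ico_eq_sum_range]
  have h1 : n + 1 - j = (n - j) + 1 := by omega
  rw [h1]
  have h2 : ∀ i ∈ Finset.range ((n - j) + 1),
      cesaroA β (n - (j + i)) * cesaroA γ ((j + i) - j)
        = cesaroA γ i * cesaroA β ((n - j) - i) := by
    intro i hi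
    rw [Finset.mem_range] at hi
    have e1 : (j + i) - j = i := by omega
    have e2 : n - (j + i) = (n - j) - i := by omega
    rw [e1, e2, mul_comm]
  rw [Finset.sum_congr rfl h2, vandermonde]

lemma inversion (α : ℝ) (c : ℕ → ℝ) (p : ℕ) :
    ∑ j ∈ Finset.range (p + 1), cesaroA (-α - 1) (p - j) *
      (∑ q ∈ Finset.range (j + 1), cesaroA (α - 1) (j - q) * c q) = c p := by
  have step1 : ∀ j ∈ Finset.range (p + 1),
      cesaroA (-α - 1) (p - j) * (∑ q ∈ Finset.range (j + 1), cesaroA (α - 1) (j - q) * c q)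
        = ∑ q ∈ Finset.range (j + 1),
            cesaroA (-α - 1) (p - j) * cesaroA (α - 1) (j - q) * c q := by
    intro j _
    rw [Finset.mul_sum]
    exact Finset.sum_congr rfl fun q _ => by ring
  rw [Finset.sum_congr rfl step1,
    sum_triangle p (fun j q => cesaroA (-α - 1) (p - j) * cesaroA (α - 1) (j - q) * c q)]
  have step2 : ∀ q ∈ Finset.range (p + 1),
      ∑ j ∈ Finset.Icc q p, cesaroA (-α - 1) (p - j) * cesaroA (α - 1) (j - q) * c q
        = cesaroA (-1) (p - q) * c q := by
    intro q hq
    rw [Finset.mem_range] at hq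
    rw [← Finset.sum_mul]
    congr 1
    have := sum_Icc_kernel (-α - 1) (α - 1) q p (by omega)
    rw [this]
    congr 1
    ring
  rw [Finset.sum_congr rfl step2]
  rw [Finset.sum_eq_single_of_mem p (Finset.self_mem_range_succ p)]
  · rw [Nat.sub_self, cesaroA_zero, one_mul]
  · intro q hq hne
    rw [Finset.mem_range] at hq
    rw [cesaroA_neg_one (by omega), zero_mul]

lemma expansion (α : ℝ) (c : ℕ → ℝ) (v n : ℕ) :
    ∑ p ∈ Finset.range (v + 1), cesaroA (α - 1) (n - p) * c p
      = ∑ j ∈ Finset.range (v + 1),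
          (∑ p ∈ Finset.Icc j v, cesaroA (α - 1) (n - p) * cesaroA (-α - 1) (p - j)) *
            (∑ q ∈ Finset.range (j + 1), cesaroA (α - 1) (j - q) * c q) := by
  set S : ℕ → ℝ := fun j => ∑ q ∈ Finset.range (j + 1), cesaroA (α - 1) (j - q) * c q with hS
  have h1 : ∀ p ∈ Finset.range (v + 1),
      cesaroA (α - 1) (n - p) * c p
        = ∑ j ∈ Finset.range (p + 1),
            cesaroA (α - 1) (n - p) * (cesaroA (-α - 1) (p - j) * S j) := by
    intro p _
    have := inversion α c p
    calc cesaroA (α - 1) (n - p) * c p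
        = cesaroA (α - 1) (n - p) * ∑ j ∈ Finset.range (p + 1),
            cesaroA (-α - 1) (p - j) * S j := by rw [this]
      _ = _ := by rw [Finset.mul_sum]
  rw [Finset.sum_congr rfl h1,
    sum_triangle v (fun p j => cesaroA (α - 1) (n - p) * (cesaroA (-α - 1) (p - j) * S j))]
  apply Finset.sum_congr rfl
  intro j _
  rw [Finset.sum_mul]
  apply Finset.sum_congr rfl
  intro p _
  ring

/-- For `0 < α ≤ 1` and `1 ≤ v ≤ n`,
`|∑_{p=1}^{v} A_{n-p}^{α-1} p a_p| ≤ A_v^α w_v^α`. -/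
theorem inner_sum_bound (a : ℕ → ℝ) (α : ℝ) (hα0 : 0 < α) (hα1 : α ≤ 1)
    (v n : ℕ) (hv : 1 ≤ v) (hvn : v ≤ n) :
    |∑ p ∈ Finset.Icc 1 v, cesaroA (α - 1) (n - p) * p * a p| ≤
      cesaroA α v * wCes α a v := by
  have hApos : ∀ j, 0 < cesaroA α j := fun j => cesaroA_pos (by linarith) j
  by_cases hone : α = 1
  · subst hone
    have hz : (1 : ℝ) - 1 = 0 := by norm_num
    have hsum : ∀ m : ℕ, ∑ p ∈ Finset.Icc 1 v, cesaroA (0:ℝ) (m - p) * p * a p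
        = ∑ p ∈ Finset.Icc 1 v, (p : ℝ) * a p := by
      intro m
      apply Finset.sum_congr rfl
      intro p _
      rw [cesaroA_order_zero, one_mul]
    rw [wCes, if_pos rfl, tCes, hz, hsum, hsum]
    rw [abs_mul, abs_inv, abs_of_pos (hApos v), ← mul_assoc,
      mul_inv_cancel₀ (ne_of_gt (hApos v)), one_mul]
  · -- case 0 < α < 1
    set c : ℕ → ℝ := fun p => (p : ℝ) * a p with hc
    set S : ℕ → ℝ := fun j => ∑ q ∈ Finset.range (j + 1), cesaroA (α - 1) (j - q) * c q
      with hSdef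
    set E : ℕ → ℝ := fun j =>
      ∑ p ∈ Finset.Icc j v, cesaroA (α - 1) (n - p) * cesaroA (-α - 1) (p - j) with hEdef
    set w := wCes α a v with hw
    -- rewrite goal sum to range form
    have hzero : ∀ p ∈ Finset.range (v + 1), p ∉ Finset.Icc 1 v →
        cesaroA (α - 1) (n - p) * c p = 0 := by
      intro p hp hnp
      rw [Finset.mem_range] at hp
      rw [Finset.mem_Icc] at hnp
      have : p = 0 := by omega
      subst this
      simp [hc]
    have hgoal : ∑ p ∈ Finset.Icc 1 v, cesaroA (α - 1) (n - p) * p * a p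
        = ∑ p ∈ Finset.range (v + 1), cesaroA (α - 1) (n - p) * c p := by
      rw [← Finset.sum_subset (by intro x hx; rw [Finset.mem_Icc] at hx; rw [Finset.mem_range]; omega) hzero]
      apply Finset.sum_congr rfl
      intro p _
      rw [hc, mul_assoc]
    -- S j = cesaroA α j * tCes α a j
    have hStCes : ∀ j, S j = cesaroA α j * tCes α a j := by
      intro j
      rw [tCes, ← mul_assoc, mul_inv_cancel₀ (ne_of_gt (hApos j)), one_mul]
      have hsub : Finset.Icc 1 j ⊆ Finset.range (j + 1) := by
        intro x hx; rw [Finset.mem_Icc] at hx; rw [Finset.mem_range]; omega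
      have hz : ∀ p ∈ Finset.range (j + 1), p ∉ Finset.Icc 1 j →
          cesaroA (α - 1) (j - p) * c p = 0 := by
        intro p hp hnp
        rw [Finset.mem_range] at hp; rw [Finset.mem_Icc] at hnp
        have : p = 0 := by omega
        subst this; simp [hc]
      rw [hSdef]
      simp only
      rw [← Finset.sum_subset hsub hz]
      apply Finset.sum_congr rfl
      intro p _
      rw [hc]; ring
    -- nonnegativity of E j
    have hE_nonneg : ∀ j, j ≤ v → 0 ≤ E j := by
      intro j hj
      have hjn : j ≤ n := le_trans hj hvn
      have hfull := sum_Icc_kernel (α - 1) (-α - 1) j n hjn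
      have hunion : Finset.Icc j n = Finset.Icc j v ∪ Finset.Icc (v + 1) n := by
        ext x
        simp only [Finset.mem_Icc, Finset.mem_union]
        omega
      have hdisj : Disjoint (Finset.Icc j v) (Finset.Icc (v + 1) n) := by
        rw [Finset.disjoint_left]
        intro x hx hx'
        rw [Finset.mem_Icc] at hx hx'
        omega
      rw [hunion, Finset.sum_union hdisj] at hfull
      have hR : ∑ p ∈ Finset.Icc (v + 1) n,
          cesaroA (α - 1) (n - p) * cesaroA (-α - 1) (p - j) ≤ 0 := by
        apply Finset.sum_nonpos
        intro p hp
        rw [Finset.mem_Icc] at hp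
        apply mul_nonpos_of_nonneg_of_nonpos
        · exact le_of_lt (cesaroA_pos (by linarith) _)
        · exact cesaroA_nonpos (by linarith) (by linarith) (by omega)
      have hD : 0 ≤ cesaroA (-α - 1 + (α - 1) + 1) (n - j) := by
        have : -α - 1 + (α - 1) + 1 = -1 := by ring
        rw [this]
        exact cesaroA_neg_one_nonneg _
      rw [hEdef]
      simp only
      linarith
    -- key sum estimate
    have hE2 : ∑ j ∈ Finset.range (v + 1), E j * cesaroA α j ≤ cesaroA α v := by
      have step1 : ∑ j ∈ Finset.range (v + 1), E j * cesaroA α j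
          = ∑ j ∈ Finset.range (v + 1), ∑ p ∈ Finset.Icc j v,
              cesaroA (α - 1) (n - p) * (cesaroA α j * cesaroA (-α - 1) (p - j)) := by
        apply Finset.sum_congr rfl
        intro j _
        rw [hEdef]
        simp only
        rw [Finset.sum_mul]
        apply Finset.sum_congr rfl
        intro p _
        ring
      rw [step1, ← sum_triangle v
        (fun p j => cesaroA (α - 1) (n - p) * (cesaroA α j * cesaroA (-α - 1) (p - j)))]
      have step2 : ∀ p ∈ Finset.range (v + 1),
          ∑ j ∈ Finset.range (p + 1),
              cesaroA (α - 1) (n - p) * (cesaroA α j * cesaroA (-α - 1) (p - j))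
            = cesaroA (α - 1) (n - p) := by
        intro p _
        rw [← Finset.mul_sum, vandermonde]
        have : α + (-α - 1) + 1 = 0 := by ring
        rw [this, cesaroA_order_zero, mul_one]
      rw [Finset.sum_congr rfl step2]
      have step3 : ∑ p ∈ Finset.range (v + 1), cesaroA (α - 1) (n - p)
          ≤ ∑ p ∈ Finset.range (v + 1), cesaroA (α - 1) (v - p) := by
        apply Finset.sum_le_sum
        intro p _
        exact cesaroA_antitone (by linarith) (by linarith) (by omega : v - p ≤ n - p)
      have step4 : ∑ p ∈ Finset.range (v + 1), cesaroA (α - 1) (v - p)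
          = cesaroA α v := by
        have hrefl := Finset.sum_range_reflect (fun k => cesaroA (α - 1) k) (v + 1)
        simp only [Nat.add_sub_cancel] at hrefl
        rw [hrefl]
        have hv2 := vandermonde (α - 1) 0 v
        have : ∀ k ∈ Finset.range (v + 1), cesaroA (α - 1) k * cesaroA 0 (v - k)
            = cesaroA (α - 1) k := by
          intro k _
          rw [cesaroA_order_zero, mul_one]
        rw [← Finset.sum_congr rfl this, hv2]
        congr 1
        ring
      linarith
    -- facts about w
    have hbdd : BddAbove ((fun j => |tCes α a j|) '' Set.Icc 1 v) :=
      ((Set.finite_Icc 1 v).image _).bddAbove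
    have hwdef : w = sSup ((fun j => |tCes α a j|) '' Set.Icc 1 v) := by
      rw [hw, wCes, if_neg hone]
    have hle : ∀ j, 1 ≤ j → j ≤ v → |tCes α a j| ≤ w := by
      intro j h1 h2
      rw [hwdef]
      exact le_csSup hbdd ⟨j, ⟨h1, h2⟩, rfl⟩
    have hw0 : 0 ≤ w := le_trans (abs_nonneg _) (hle v hv le_rfl)
    -- per-term bound on |S j|
    have hSj : ∀ j, j ≤ v → |S j| ≤ cesaroA α j * w := by
      intro j hj
      rcases Nat.eq_zero_or_pos j with h0 | hpos
      · subst h0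
        have : S 0 = 0 := by
          rw [hSdef]
          simp [hc]
        rw [this, abs_zero, cesaroA_zero, one_mul]
        exact hw0
      · rw [hStCes j, abs_mul, abs_of_pos (hApos j)]
        exact mul_le_mul_of_nonneg_left (hle j hpos hj) (le_of_lt (hApos j))
    -- final chain
    rw [hgoal, expansion α c v n]
    calc |∑ j ∈ Finset.range (v + 1), E j * S j|
        ≤ ∑ j ∈ Finset.range (v + 1), |E j * S j| := Finset.abs_sum_le_sum_abs _ _
      _ ≤ ∑ j ∈ Finset.range (v + 1), E j * (cesaroA α j * w) := by
          apply Finset.sum_le_sum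
          intro j hj
          rw [Finset.mem_range] at hj
          have hEj := hE_nonneg j (by omega)
          rw [abs_mul, abs_of_nonneg hEj]
          exact mul_le_mul_of_nonneg_left (hSj j (by omega)) hEj
      _ = (∑ j ∈ Finset.range (v + 1), E j * cesaroA α j) * w := by
          rw [Finset.sum_mul]
          apply Finset.sum_congr rfl
          intro j _
          ring
      _ ≤ cesaroA α v * w := mul_le_mul_of_nonneg_right hE2 hw0
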